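/- Let a, b, c ≥ 0 with a = b (i.e., ∑_{S} Γ = ∑_{Sᶜ} |Γ|), n ≥ 1, and σ > 0. Define L(E) = a·exp(−(2(1+(n−1)E)²−2)/(2σ²)) + a₂·exp(−2(nE)²/(2σ²)) − b·exp(−(1−2nE(1+(n−1)E))/(2σ²)) for E ≥ 0, where a₂ ≥ 0. Then L is nonincreasing in E on [0,∞), and lim_{E→0⁺} L(E) = a + a₂ − b·exp(−1/(2σ²)). -/
import Mathlib


theorem stmt_3 (a a₂ b : ℝ) (ha : 0 ≤ a) (hb : 0 ≤ b) (hc : 0 ≤ a₂) (hab : a = b)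
    (n : ℕ) (hn : 1 ≤ n) (σ : ℝ) (hσ : 0 < σ) :
    AntitoneOn (fun E : ℝ =>
        a * Real.exp (-(2 * (1 + ((n : ℝ) - 1) * E) ^ 2 - 2) / (2 * σ ^ 2))
      + a₂ * Real.exp (-(2 * ((n : ℝ) * E) ^ 2) / (2 * σ ^ 2))
      - b * Real.exp (-(1 - 2 * (n : ℝ) * E * (1 + ((n : ℝ) - 1) * E)) / (2 * σ ^ 2)))
      (Set.Ici (0 : ℝ)) ∧
    Filter.Tendsto (fun E : ℝ =>
        a * Real.exp (-(2 * (1 + ((n : ℝ) - 1) * E) ^ 2 - 2) / (2 * σ ^ 2))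
      + a₂ * Real.exp (-(2 * ((n : ℝ) * E) ^ 2) / (2 * σ ^ 2))
      - b * Real.exp (-(1 - 2 * (n : ℝ) * E * (1 + ((n : ℝ) - 1) * E)) / (2 * σ ^ 2)))
      (nhdsWithin 0 (Set.Ioi 0))
      (nhds (a + a₂ - b * Real.exp (-1 / (2 * σ ^ 2)))) := by
  have hσ2 : (0:ℝ) < 2 * σ ^ 2 := by positivity
  have hn1 : (1:ℝ) ≤ (n:ℝ) := by exact_mod_cast hn
  constructor
  · intro x hx y hy hxy
    simp only [Set.mem_Ici] at hx hy
    have h1 : Real.exp (-(2 * (1 + ((n : ℝ) - 1) * y) ^ 2 - 2) / (2 * σ ^ 2))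
        ≤ Real.exp (-(2 * (1 + ((n : ℝ) - 1) * x) ^ 2 - 2) / (2 * σ ^ 2)) := by
      apply Real.exp_le_exp.mpr
      apply div_le_div_of_nonneg_right _ hσ2.le |>.trans_eq rfl
      nlinarith [mul_nonneg (mul_nonneg (sub_nonneg.mpr hn1) (sub_nonneg.mpr hxy))
        (by nlinarith [mul_nonneg (sub_nonneg.mpr hn1) hx, mul_nonneg (sub_nonneg.mpr hn1) hy] :
          (0:ℝ) ≤ 2 + ((n:ℝ)-1)*x + ((n:ℝ)-1)*y)]
    have h2 : Real.exp (-(2 * ((n : ℝ) * y) ^ 2) / (2 * σ ^ 2))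
        ≤ Real.exp (-(2 * ((n : ℝ) * x) ^ 2) / (2 * σ ^ 2)) := by
      apply Real.exp_le_exp.mpr
      apply div_le_div_of_nonneg_right _ hσ2.le |>.trans_eq rfl
      nlinarith [mul_nonneg (sq_nonneg ((n:ℝ))) (mul_nonneg (sub_nonneg.mpr hxy) (add_nonneg hx hy))]
    have h3 : Real.exp (-(1 - 2 * (n : ℝ) * x * (1 + ((n : ℝ) - 1) * x)) / (2 * σ ^ 2))
        ≤ Real.exp (-(1 - 2 * (n : ℝ) * y * (1 + ((n : ℝ) - 1) * y)) / (2 * σ ^ 2)) := by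
      apply Real.exp_le_exp.mpr
      apply div_le_div_of_nonneg_right _ hσ2.le |>.trans_eq rfl
      nlinarith [mul_nonneg (Nat.cast_nonneg (α := ℝ) n) (sub_nonneg.mpr hxy),
        mul_nonneg (mul_nonneg (Nat.cast_nonneg (α := ℝ) n) (sub_nonneg.mpr hn1))
          (mul_nonneg (sub_nonneg.mpr hxy) (add_nonneg hx hy))]
    have := mul_le_mul_of_nonneg_left h1 ha
    have := mul_le_mul_of_nonneg_left h2 hc
    have := mul_le_mul_of_nonneg_left h3 hb
    simp only
    linarith
  · have hcont : Filter.Tendsto (fun E : ℝ =>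
        a * Real.exp (-(2 * (1 + ((n : ℝ) - 1) * E) ^ 2 - 2) / (2 * σ ^ 2))
      + a₂ * Real.exp (-(2 * ((n : ℝ) * E) ^ 2) / (2 * σ ^ 2))
      - b * Real.exp (-(1 - 2 * (n : ℝ) * E * (1 + ((n : ℝ) - 1) * E)) / (2 * σ ^ 2)))
      (nhds 0) (nhds (a * Real.exp (-(2 * (1 + ((n : ℝ) - 1) * 0) ^ 2 - 2) / (2 * σ ^ 2))
      + a₂ * Real.exp (-(2 * ((n : ℝ) * 0) ^ 2) / (2 * σ ^ 2))
      - b * Real.exp (-(1 - 2 * (n : ℝ) * 0 * (1 + ((n : ℝ) - 1) * 0)) / (2 * σ ^ 2)))) := by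
      apply Continuous.tendsto
      continuity
    have : (a * Real.exp (-(2 * (1 + ((n : ℝ) - 1) * 0) ^ 2 - 2) / (2 * σ ^ 2))
      + a₂ * Real.exp (-(2 * ((n : ℝ) * 0) ^ 2) / (2 * σ ^ 2))
      - b * Real.exp (-(1 - 2 * (n : ℝ) * 0 * (1 + ((n : ℝ) - 1) * 0)) / (2 * σ ^ 2)))
      = a + a₂ - b * Real.exp (-1 / (2 * σ ^ 2)) := by
      norm_num
    rw [this] at hcont
    exact hcont.mono_left nhdsWithin_le_nhds
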